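/- For all a > 0 with G(a) ≠ 0 and G(1/a) ≠ 0, H(1/a) = 1/H(a) provided H(a) ≠ 0, where H(a) = a²·F(a)/G(a), F(a) = S_n·a − C₂₁(a), G(a) = S_n − a³·C₁₂(a). -/

import Mathlib

open Real Finset

lemma key_inv (a : ℝ) (ha : 0 < a) (c : ℝ) (hc : |c| ≤ 1) :
    ((1 - (1/a) * c) / (1 + (1/a)^2 - 2*(1/a)*c) ^ ((3:ℝ)/2)
      = a^2 * ((a - c) / (1 + a^2 - 2*a*c) ^ ((3:ℝ)/2))) ∧
    (((1/a) - c) / (1 + (1/a)^2 - 2*(1/a)*c) ^ ((3:ℝ)/2)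
      = a^2 * ((1 - a*c) / (1 + a^2 - 2*a*c) ^ ((3:ℝ)/2))) := by
  have ha' := ha.ne'
  have hD : 0 ≤ 1 + a^2 - 2*a*c := by nlinarith [sq_nonneg (a - c), sq_abs c, abs_nonneg c]
  have hEq : 1 + (1/a)^2 - 2*(1/a)*c = (1 + a^2 - 2*a*c) / a^2 := by field_simp; ring
  have hcube : ((a^2 : ℝ)) ^ ((3:ℝ)/2) = a^3 := by
    rw [← Real.rpow_natCast a 2, ← Real.rpow_mul ha.le,
      show ((2:ℕ):ℝ) * ((3:ℝ)/2) = ((3:ℕ):ℝ) by norm_num, Real.rpow_natCast]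
  have hpow : ((1 + a^2 - 2*a*c) / a^2) ^ ((3:ℝ)/2)
      = (1 + a^2 - 2*a*c) ^ ((3:ℝ)/2) / a^3 := by
    rw [Real.div_rpow hD (sq_nonneg a), hcube]
  rw [hEq, hpow]
  constructor <;>
  · rw [div_div_eq_mul_div]
    rcases eq_or_ne ((1 + a^2 - 2*a*c) ^ ((3:ℝ)/2)) 0 with h | h
    · simp [h]
    · field_simp

theorem stmt_3 (n : ℕ) (hn : 2 ≤ n) (a : ℝ) (ha : 0 < a) :
    (let Sn : ℝ := 1/4 * ∑ k ∈ Finset.range (n-1), 1 / Real.sin ((k+1 : ℝ) * Real.pi / n)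
     let C12 : ℝ → ℝ := fun x => ∑ k ∈ Finset.range n,
        (1 - x * Real.cos ((2*(k : ℝ)+1) * Real.pi / n)) /
          (1 + x^2 - 2*x*Real.cos ((2*(k : ℝ)+1) * Real.pi / n)) ^ ((3:ℝ)/2)
     let C21 : ℝ → ℝ := fun x => ∑ k ∈ Finset.range n,
        (x - Real.cos ((2*(k : ℝ)+1) * Real.pi / n)) /
          (1 + x^2 - 2*x*Real.cos ((2*(k : ℝ)+1) * Real.pi / n)) ^ ((3:ℝ)/2)
     let F : ℝ → ℝ := fun x => Sn * x - C21 x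
     let G : ℝ → ℝ := fun x => Sn - x^3 * C12 x
     let H : ℝ → ℝ := fun x => x^2 * F x / G x
     G a ≠ 0 → G (1/a) ≠ 0 → H a ≠ 0 → H (1/a) = 1 / H a) := by
  intro Sn C12 C21 F G H hG hG2 hH
  have ha' := ha.ne'
  have h12 : C12 (1/a) = a^2 * C21 a := by
    simp only [C12, C21, Finset.mul_sum]
    exact Finset.sum_congr rfl fun k _ =>
      (key_inv a ha _ (Real.abs_cos_le_one _)).1
  have h21 : C21 (1/a) = a^2 * C12 a := by
    simp only [C12, C21, Finset.mul_sum]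
    exact Finset.sum_congr rfl fun k _ =>
      (key_inv a ha _ (Real.abs_cos_le_one _)).2
  have hF : F a ≠ 0 := by
    intro h
    apply hH
    simp only [H, h, mul_zero, zero_div]
  simp only [H, F, G] at hH hG hG2 ⊢
  rw [h12] at hG2; rw [h12, h21]
  field_simp at hG2 ⊢
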